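/- Let q > 1. The function α(s) = ω_q(s)^q / s - 1 is strictly decreasing on (0, 1], with α(1) = 0; in particular α(s) > 0 for all s ∈ (0,1). -/

import Mathlib

open Real Set

/-- `w` plays the role of `ω_q` : on `(0,1]` it takes values in `[1, q/(q-1)]` and inverts
`H_q(z) = -(q-1)z^q + q z^{q-1}`. -/
theorem stmt16 (q : ℝ) (hq : 1 < q) (w : ℝ → ℝ)
    (hw : ∀ s ∈ Ioc (0 : ℝ) 1, w s ∈ Icc 1 (q / (q - 1)) ∧
      -(q - 1) * (w s) ^ q + q * (w s) ^ (q - 1) = s) :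
    StrictAntiOn (fun s : ℝ => (w s) ^ q / s - 1) (Ioc 0 1) ∧
    (w 1) ^ q / 1 - 1 = 0 ∧
    (∀ s ∈ Ioo (0 : ℝ) 1, 0 < (w s) ^ q / s - 1) := by
  have hq0 : 0 < q - 1 := by linarith
  set H : ℝ → ℝ := fun z => -(q - 1) * z ^ q + q * z ^ (q - 1) with hHdef
  have hderiv : ∀ z : ℝ, 0 < z →
      HasDerivAt H (q * (q - 1) * (z ^ (q - 2) - z ^ (q - 1))) z := by
    intro z hz
    have h1 := (Real.hasDerivAt_rpow_const (x := z) (p := q) (Or.inl hz.ne'))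
    have h2 := (Real.hasDerivAt_rpow_const (x := z) (p := q - 1) (Or.inl hz.ne'))
    have h := (h1.const_mul (-(q - 1))).add (h2.const_mul q)
    have h21 : q - 1 - 1 = q - 2 := by ring
    exact h.congr_deriv (by rw [h21]; ring)
  have hub : (1 : ℝ) < q / (q - 1) := by
    rw [lt_div_iff₀ hq0]; linarith
  have hHanti : StrictAntiOn H (Icc 1 (q / (q - 1))) := by
    apply strictAntiOn_of_deriv_neg (convex_Icc _ _)
    · intro z hz
      exact ((hderiv z (by linarith [hz.1])).continuousAt).continuousWithinAt
    · intro z hz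
      rw [interior_Icc] at hz
      have hz1 : 1 < z := hz.1
      rw [(hderiv z (by linarith)).deriv]
      have hlt : z ^ (q - 2) < z ^ (q - 1) :=
        Real.rpow_lt_rpow_of_exponent_lt hz1 (by linarith)
      have hpos : 0 < q * (q - 1) * (z ^ (q - 1) - z ^ (q - 2)) :=
        mul_pos (mul_pos (by linarith) hq0) (by linarith)
      linarith
  have key : ∀ s ∈ Ioc (0 : ℝ) 1,
      0 < q - (q - 1) * w s ∧ (w s) ^ q / s = w s / (q - (q - 1) * w s) := by
    intro s hs
    obtain ⟨⟨hz1, hz2⟩, hHs⟩ := hw s hs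
    have hzpos : (0 : ℝ) < w s := by linarith
    have hpow : (w s) ^ q = (w s) ^ (q - 1) * w s := by
      rw [← Real.rpow_add_one hzpos.ne' (q - 1), sub_add_cancel]
    have hfac : (w s) ^ (q - 1) * (q - (q - 1) * w s) = s := by
      linear_combination hHs + (q - 1) * hpow
    have hp : 0 < (w s) ^ (q - 1) := Real.rpow_pos_of_pos hzpos _
    have hd : 0 < q - (q - 1) * w s := by
      by_contra h
      push_neg at h
      have := mul_nonpos_of_nonneg_of_nonpos hp.le h
      linarith [hs.1, hfac.symm.trans_le this]
    refine ⟨hd, ?_⟩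
    rw [div_eq_div_iff hs.1.ne' hd.ne', hpow]
    linear_combination w s * hfac
  have hwanti : ∀ s1 ∈ Ioc (0 : ℝ) 1, ∀ s2 ∈ Ioc (0 : ℝ) 1, s1 < s2 → w s2 < w s1 := by
    intro s1 h1 s2 h2 hlt
    obtain ⟨hm1, hH1⟩ := hw s1 h1
    obtain ⟨hm2, hH2⟩ := hw s2 h2
    by_contra h
    push_neg at h
    rcases eq_or_lt_of_le h with heq | hlt2
    · rw [← heq] at hH2
      rw [hH1] at hH2
      linarith
    · have hx := hHanti hm1 hm2 hlt2
      have e1 : H (w s1) = s1 := hH1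
      have e2 : H (w s2) = s2 := hH2
      rw [e1, e2] at hx
      linarith
  have gmono : ∀ z1 z2 : ℝ, 1 ≤ z1 → z1 < z2 → 0 < q - (q - 1) * z2 →
      z1 / (q - (q - 1) * z1) < z2 / (q - (q - 1) * z2) := by
    intro z1 z2 h1 h12 hd2
    have hd1 : 0 < q - (q - 1) * z1 := by nlinarith
    rw [div_lt_div_iff₀ hd1 hd2]
    nlinarith
  have hone : (1 : ℝ) ∈ Ioc (0 : ℝ) 1 := ⟨one_pos, le_refl 1⟩
  have hw1 : w 1 = 1 := by
    obtain ⟨hm1, hH1⟩ := hw 1 hone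
    have e1 : H (w 1) = 1 := hH1
    have e2 : H 1 = 1 := by
      simp only [hHdef]
      rw [Real.one_rpow, Real.one_rpow]; ring
    exact hHanti.injOn hm1 ⟨le_refl 1, le_of_lt hub⟩ (by rw [e1, e2])
  have halpha1 : (w 1) ^ q / 1 - 1 = 0 := by
    rw [hw1, Real.one_rpow]; norm_num
  have hSA : StrictAntiOn (fun s : ℝ => (w s) ^ q / s - 1) (Ioc 0 1) := by
    intro s1 hs1 s2 hs2 h12
    obtain ⟨hd1, he1⟩ := key s1 hs1
    obtain ⟨hd2, he2⟩ := key s2 hs2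
    simp only
    rw [he1, he2]
    have hwlt : w s2 < w s1 := hwanti s1 hs1 s2 hs2 h12
    have h1le : 1 ≤ w s2 := (hw s2 hs2).1.1
    have := gmono (w s2) (w s1) h1le hwlt hd1
    linarith
  refine ⟨hSA, halpha1, ?_⟩
  intro s hs
  have := hSA ⟨hs.1, le_of_lt hs.2⟩ hone hs.2
  simp only at this
  rw [halpha1] at this
  exact this
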